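/- Let p be an odd prime and k an integer with 1 \le k \le (p-1)/2. Then \binom{(p-1)/2 + k}{2k} \equiv \binom{2k}{k}/(-16)^k \cdot (1 - p^2 \sum_{i=1}^{k} 1/(2i-1)^2) \pmod{p^4}, where the congruence is between p-adic integers (or rational numbers whose denominators are coprime to p). -/

import Mathlib

open Finset

lemma descFact (n : ℕ) : ∀ k, k ≤ n →
    (n + k).descFactorial (2 * k) = ∏ i ∈ Icc 1 k, (n + i) * (n + 1 - i) := by
  intro k
  induction k with
  | zero => simp
  | succ k ih =>
    intro hk
    have hk' : k ≤ n := by omega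
    have h1 : n + (k + 1) = (n + k) + 1 := by ring
    have h2 : 2 * (k + 1) = (2 * k + 1) + 1 := by ring
    rw [h1, h2, Nat.succ_descFactorial_succ, Nat.descFactorial_succ,
      Finset.prod_Icc_succ_top (by omega), ih hk']
    have : n + k - 2 * k = n + 1 - (k + 1) := by omega
    rw [this]; ring

lemma oddProdFact : ∀ k : ℕ, (∏ i ∈ Icc 1 k, (2 * i - 1)) * (2 ^ k * k.factorial)
    = (2 * k).factorial := by
  intro k
  induction k with
  | zero => simp
  | succ k ih =>
    rw [Finset.prod_Icc_succ_top (by omega)]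
    have h2 : 2 * (k + 1) = (2 * k + 1) + 1 := by ring
    rw [h2, Nat.factorial_succ, Nat.factorial_succ, Nat.factorial_succ, ← ih]
    have h3 : 2 * (k + 1) - 1 = 2 * k + 1 := by omega
    simp only [Nat.add_sub_cancel]; ring

lemma expandProd (t : ℤ) (b : ℕ → ℤ) (s : Finset ℕ) : ∃ E : ℤ,
    ∏ i ∈ s, (t + b i) = ∏ i ∈ s, b i
      + t * ∑ i ∈ s, ∏ j ∈ s.erase i, b j + t ^ 2 * E := by
  induction s using Finset.induction_on with
  | empty => exact ⟨0, by simp⟩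
  | insert a s ha ih =>
    obtain ⟨E, hE⟩ := ih
    refine ⟨(∑ i ∈ s, ∏ j ∈ s.erase i, b j) + t * E + b a * E, ?_⟩
    rw [Finset.prod_insert ha, Finset.prod_insert ha, Finset.sum_insert ha,
      Finset.erase_insert ha, hE]
    have hsum : ∑ i ∈ s, ∏ j ∈ (insert a s).erase i, b j
        = ∑ i ∈ s, b a * ∏ j ∈ s.erase i, b j := by
      refine Finset.sum_congr rfl fun i hi => ?_
      rw [Finset.erase_insert_of_ne (by rintro rfl; exact ha hi),
        Finset.prod_insert (fun h => ha (Finset.erase_subset _ _ h))]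
    rw [hsum, ← Finset.mul_sum]; ring

/-- `a ≡ b (mod p^k)` as rationals: `a - b` is `p^k` times a `p`-integral rational. -/
def ratCongr (p k : ℕ) (a b : ℚ) : Prop :=
  ∃ c : ℚ, a - b = (p : ℚ) ^ k * c ∧ ¬ (p ∣ c.den)

theorem stmt1 (p : ℕ) (hp : p.Prime) (hodd : p ≠ 2) (k : ℕ) (hk1 : 1 ≤ k)
    (hk2 : k ≤ (p - 1) / 2) :
    ratCongr p 4 (((p - 1) / 2 + k).choose (2 * k) : ℚ)
      (((2 * k).choose k : ℚ) / (-16 : ℚ) ^ k *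
        (1 - (p : ℚ) ^ 2 * ∑ i ∈ Finset.Icc 1 k, 1 / (2 * (i : ℚ) - 1) ^ 2)) := by
  obtain ⟨n, hn⟩ := hp.odd_of_ne_two hodd
  have hn2 : (p - 1) / 2 = n := by omega
  have hk : k ≤ n := by omega
  rw [hn2]
  set bQ : ℕ → ℚ := fun i => -(2 * (i : ℚ) - 1) ^ 2 with hbQ
  set G : ℚ := ((2 * k).factorial : ℚ) with hGdef
  set F : ℚ := (k.factorial : ℚ) with hFdef
  have hF : F ≠ 0 := Nat.cast_ne_zero.mpr k.factorial_ne_zero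
  have hG : G ≠ 0 := Nat.cast_ne_zero.mpr (2 * k).factorial_ne_zero
  have h4 : (4 : ℚ) ^ k ≠ 0 := by positivity
  -- cast helper
  have hcast : ∀ i ∈ Icc 1 k, ((2 * i - 1 : ℕ) : ℚ) = 2 * (i : ℚ) - 1 := by
    intro i hi
    have h1 : 1 ≤ i := (mem_Icc.mp hi).1
    push_cast [Nat.cast_sub (by omega : 1 ≤ 2 * i)]
    ring
  -- Step A
  have hnat : (2 * k).factorial * ((n + k).choose (2 * k))
      = ∏ i ∈ Icc 1 k, (n + i) * (n + 1 - i) := by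
    rw [← Nat.descFactorial_eq_factorial_mul_choose]; exact descFact n k hk
  have haQ : G * (((n + k).choose (2 * k) : ℕ) : ℚ)
      = ∏ i ∈ Icc 1 k, (((n : ℚ) + i) * ((n : ℚ) + 1 - i)) := by
    have := congrArg (fun m : ℕ => (m : ℚ)) hnat
    simp only [Nat.cast_mul, Nat.cast_prod] at this
    rw [hGdef, this]
    refine Finset.prod_congr rfl fun i hi => ?_
    have h1 : i ≤ k := (mem_Icc.mp hi).2
    push_cast [Nat.cast_sub (by omega : i ≤ n + 1)]
    ring
  have hP : (∏ i ∈ Icc 1 k, ((p : ℚ) ^ 2 + bQ i))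
      = 4 ^ k * ∏ i ∈ Icc 1 k, (((n : ℚ) + i) * ((n : ℚ) + 1 - i)) := by
    have : ∀ i ∈ Icc 1 k, (p : ℚ) ^ 2 + bQ i
        = 4 * (((n : ℚ) + i) * ((n : ℚ) + 1 - i)) := by
      intro i _
      have hpQ : (p : ℚ) = 2 * n + 1 := by exact_mod_cast congrArg (Nat.cast : ℕ → ℚ) hn
      rw [hbQ, hpQ]; ring
    rw [Finset.prod_congr rfl this, Finset.prod_mul_distrib, Finset.prod_const,
      Nat.card_Icc]
    norm_num
  have a_eq : (((n + k).choose (2 * k) : ℕ) : ℚ)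
      = (∏ i ∈ Icc 1 k, ((p : ℚ) ^ 2 + bQ i)) / (4 ^ k * G) := by
    rw [hP, ← haQ]; field_simp
  -- Step B
  set A : ℚ := ((∏ i ∈ Icc 1 k, (2 * i - 1) : ℕ) : ℚ) with hAdef
  have hA : A * (2 ^ k * F) = G := by
    rw [hAdef, hFdef, hGdef]; exact_mod_cast congrArg (Nat.cast : ℕ → ℚ) (oddProdFact k)
  have hC : (((2 * k).choose k : ℕ) : ℚ) * F * F = G := by
    rw [hFdef, hGdef]
    have h := Nat.choose_mul_factorial_mul_factorial (by omega : k ≤ 2 * k)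
    rw [show 2 * k - k = k by omega] at h
    exact_mod_cast congrArg (Nat.cast : ℕ → ℚ) h
  have hAprod : A = ∏ i ∈ Icc 1 k, (2 * (i : ℚ) - 1) := by
    rw [hAdef, Nat.cast_prod]
    exact Finset.prod_congr rfl hcast
  have hprod16 : (∏ i ∈ Icc 1 k, bQ i) * (-16 : ℚ) ^ k = 16 ^ k * A ^ 2 := by
    have hc : ((-16 : ℚ)) ^ k = ∏ _i ∈ Icc 1 k, (-16 : ℚ) := by
      rw [Finset.prod_const, Nat.card_Icc]; norm_num
    rw [hc, ← Finset.prod_mul_distrib]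
    have : ∀ i ∈ Icc 1 k, bQ i * (-16 : ℚ) = 16 * (2 * (i : ℚ) - 1) ^ 2 := by
      intro i _; rw [hbQ]; ring
    rw [Finset.prod_congr rfl this, Finset.prod_mul_distrib, Finset.prod_const,
      Nat.card_Icc]
    simp only [Nat.add_sub_cancel]
    rw [Finset.prod_pow, ← hAprod]
  have hm16 : ((-16 : ℚ)) ^ k ≠ 0 := pow_ne_zero _ (by norm_num)
  have b_eq : (((2 * k).choose k : ℕ) : ℚ) / (-16 : ℚ) ^ k
      = (∏ i ∈ Icc 1 k, bQ i) / (4 ^ k * G) := by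
    rw [div_eq_div_iff hm16 (by positivity), hprod16]
    have h16 : (16 : ℚ) ^ k = 2 ^ k * 2 ^ k * (2 ^ k * 2 ^ k) := by
      rw [show (16:ℚ) = 2 * 2 * (2 * 2) by norm_num, mul_pow, mul_pow]
    have h4' : (4 : ℚ) ^ k = 2 ^ k * 2 ^ k := by
      rw [show (4:ℚ) = 2 * 2 by norm_num, mul_pow]
    rw [h16, h4']
    refine mul_right_cancel₀ (mul_ne_zero hF hF) ?_
    linear_combination (2 ^ k * 2 ^ k * G) * hC
      - (2 ^ k * 2 ^ k) * (A * (2 ^ k * F) + G) * hA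
  -- Step S
  have hS : (∏ i ∈ Icc 1 k, bQ i) * (∑ i ∈ Icc 1 k, 1 / (2 * (i : ℚ) - 1) ^ 2)
      = - ∑ i ∈ Icc 1 k, ∏ j ∈ (Icc 1 k).erase i, bQ j := by
    rw [Finset.mul_sum, ← Finset.sum_neg_distrib]
    refine Finset.sum_congr rfl fun i hi => ?_
    have h1 : (1 : ℚ) ≤ i := by exact_mod_cast (mem_Icc.mp hi).1
    have hne : (2 * (i : ℚ) - 1) ≠ 0 := by intro h; linarith
    rw [← Finset.mul_prod_erase _ _ hi, hbQ]
    field_simp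
  -- Step expand over ℤ
  obtain ⟨E, hE⟩ := expandProd ((p : ℤ) ^ 2) (fun i => -(2 * (i : ℤ) - 1) ^ 2) (Icc 1 k)
  have hEQ : (∏ i ∈ Icc 1 k, ((p : ℚ) ^ 2 + bQ i))
      = ∏ i ∈ Icc 1 k, bQ i
        + (p : ℚ) ^ 2 * ∑ i ∈ Icc 1 k, ∏ j ∈ (Icc 1 k).erase i, bQ j
        + ((p : ℚ) ^ 2) ^ 2 * (E : ℚ) := by
    have := congrArg (fun z : ℤ => (z : ℚ)) hE
    push_cast at this
    convert this using 2
  -- assemble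
  set DN : ℕ := 4 ^ k * (2 * k).factorial with hDN
  have hDNQ : ((DN : ℕ) : ℚ) = 4 ^ k * G := by rw [hDN]; push_cast; ring
  refine ⟨(E : ℚ) / ((DN : ℕ) : ℚ), ?_, ?_⟩
  · rw [a_eq, b_eq, hDNQ, div_mul_eq_mul_div, div_sub_div_same]
    have key : (∏ i ∈ Icc 1 k, ((p : ℚ) ^ 2 + bQ i))
        - (∏ i ∈ Icc 1 k, bQ i) * (1 - (p : ℚ) ^ 2 * ∑ i ∈ Icc 1 k, 1 / (2 * (i : ℚ) - 1) ^ 2)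
        = (p : ℚ) ^ 4 * (E : ℚ) := by
      linear_combination hEQ + (p : ℚ) ^ 2 * hS
    rw [key, mul_div_assoc]
  · intro hdvd
    have hden : ((((E : ℚ) / ((DN : ℕ) : ℚ)).den : ℤ)) ∣ (DN : ℤ) := by
      have heq : (E : ℚ) / ((DN : ℕ) : ℚ) = Rat.divInt E (DN : ℤ) := by
        rw [Rat.divInt_eq_div]; push_cast; ring
      rw [heq]
      exact Rat.den_dvd E (DN : ℤ)
    have hdvd' : (p : ℤ) ∣ (DN : ℤ) :=
      dvd_trans (Int.natCast_dvd_natCast.mpr hdvd) hden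
    have hpDN : p ∣ DN := Int.natCast_dvd_natCast.mp hdvd'
    rw [hDN] at hpDN
    rcases (Nat.Prime.dvd_mul hp).mp hpDN with h | h
    · have h4d : p ∣ 4 := hp.dvd_of_dvd_pow h
      have : p ∣ 2 := hp.dvd_of_dvd_pow (show p ∣ 2 ^ 2 by rwa [show (4:ℕ) = 2 ^ 2 from rfl] at h4d)
      exact hodd ((Nat.prime_dvd_prime_iff_eq hp Nat.prime_two).mp this)
    · have := (Nat.Prime.dvd_factorial hp).mp h
      omega
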